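/- Let E be a real inner product space, f : E → ℝ differentiable with L-Lipschitz gradient for some L > 0, and r : E → ℝ any function; set F = f + r. Let x_prev, x ∈ E, ω ≥ 0, and x̂ = x + ω(x − x_prev). If x⁺ minimizes over E the function z ↦ ⟨∇f(x̂), z − x̂⟩ + L‖z − x̂‖² + r(z) (i.e., the prox-linear subproblem with stepsize α = 1/(2L)), then F(x) − F(x⁺) ≥ (L/4)‖x − x⁺‖² − 9 L ω² ‖x_prev − x‖². Consequently, if in addition ω ≤ (δ/6)·√(L′/L) for some constants L′ > 0 and 0 ≤ δ < 1, then F(x) − F(x⁺) ≥ (L/4)‖x − x⁺‖² − (δ² L′/4)‖x_prev − x‖². -/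

import Mathlib

open RealInnerProductSpace

/-- Quadratic upper/lower bound for a function with `L`-Lipschitz gradient. -/
theorem quad_bound_aux {E : Type*} [NormedAddCommGroup E] [InnerProductSpace ℝ E] [CompleteSpace E]
    (f : E → ℝ) (g : E → E) (L : ℝ)
    (hdiff : ∀ x, HasGradientAt f (g x) x)
    (hlip : ∀ u v : E, ‖g u - g v‖ ≤ L * ‖u - v‖)
    (x v : E) : |f (x + v) - f x - ⟪g x, v⟫| ≤ L / 2 * ‖v‖ ^ 2 := by
  have hbd : ∀ t ∈ Set.Icc (0:ℝ) 1, |⟪g (x + t • v), v⟫ - ⟪g x, v⟫| ≤ L * t * ‖v‖ ^ 2 := by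
    intro t ht
    have h1 : |⟪g (x + t • v) - g x, v⟫| ≤ ‖g (x + t • v) - g x‖ * ‖v‖ :=
      abs_real_inner_le_norm _ _
    have h2 : ‖g (x + t • v) - g x‖ ≤ L * (t * ‖v‖) := by
      have := hlip (x + t • v) x
      simpa [norm_smul, abs_of_nonneg ht.1] using this
    rw [inner_sub_left] at h1
    nlinarith [norm_nonneg v, norm_nonneg (g (x + t • v) - g x)]
  have key : ∀ (c : ℝ), |c| = 1 →
      c * (f (x + v) - f x - ⟪g x, v⟫) + L / 2 * ‖v‖ ^ 2 ≥ 0 := by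
    intro c hc
    set h : ℝ → ℝ := fun t => c * (f (x + t • v) - f x - t * ⟪g x, v⟫) + L * t ^ 2 / 2 * ‖v‖ ^ 2 with hh
    have hderiv : ∀ t : ℝ, HasDerivAt h
        (c * (⟪g (x + t • v), v⟫ - ⟪g x, v⟫) + L * t * ‖v‖ ^ 2) t := by
      intro t
      have h1 : HasDerivAt (fun s : ℝ => x + s • v) v t := by
        simpa using ((hasDerivAt_id t).smul_const v).const_add x
      have h2 : HasDerivAt (fun s : ℝ => f (x + s • v)) ⟪g (x + t • v), v⟫ t := by
        simpa [InnerProductSpace.toDual_apply_apply, Function.comp_def] using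
          (hdiff (x + t • v)).hasFDerivAt.comp_hasDerivAt t h1
      have h3 : HasDerivAt (fun s : ℝ => f (x + s • v) - f x - s * ⟪g x, v⟫)
          (⟪g (x + t • v), v⟫ - ⟪g x, v⟫) t := by
        exact (h2.sub_const (f x)).sub (hasDerivAt_mul_const _)
      have h4 : HasDerivAt (fun s : ℝ => L * s ^ 2 / 2 * ‖v‖ ^ 2) (L * t * ‖v‖ ^ 2) t := by
        have h5 : HasDerivAt (fun s : ℝ => s ^ 2) (2 * t) t := by
          simpa using hasDerivAt_pow 2 t
        have := ((h5.const_mul L).div_const 2).mul_const (‖v‖ ^ 2)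
        rw [show L * t * ‖v‖ ^ 2 = L * (2 * t) / 2 * ‖v‖ ^ 2 by ring]; exact this
      exact (h3.const_mul c).add h4
    have hmono : MonotoneOn h (Set.Icc 0 1) := by
      apply monotoneOn_of_deriv_nonneg (convex_Icc 0 1)
      · exact (continuous_iff_continuousAt.2 fun t => (hderiv t).continuousAt).continuousOn
      · exact fun t _ => (hderiv t).differentiableAt.differentiableWithinAt
      · intro t ht
        rw [(hderiv t).deriv]
        have ht' : t ∈ Set.Icc (0:ℝ) 1 := Set.mem_Icc_of_Ioo (by simpa using ht)
        have := hbd t ht'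
        have habs : |c * (⟪g (x + t • v), v⟫ - ⟪g x, v⟫)| ≤ L * t * ‖v‖ ^ 2 := by
          rw [abs_mul, hc, one_mul]; exact this
        have := neg_abs_le (c * (⟪g (x + t • v), v⟫ - ⟪g x, v⟫))
        linarith
    have h01 := hmono (Set.left_mem_Icc.2 zero_le_one) (Set.right_mem_Icc.2 zero_le_one) zero_le_one
    simp only [hh] at h01
    norm_num at h01
    linarith
  have k1 := key 1 (by norm_num)
  have k2 := key (-1) (by norm_num)
  rw [abs_le]; constructor <;> linarith

set_option maxHeartbeats 1000000 in
/-- Lemma 2.1 (block prox-linear descent, stepsize `1/(2L)`):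
objective decrease of one prox-linear step with extrapolation. -/
theorem prox_linear_descent_half
    {E : Type*} [NormedAddCommGroup E] [InnerProductSpace ℝ E] [CompleteSpace E]
    (f : E → ℝ) (g : E → E) (r : E → ℝ) (L : ℝ) (hL : 0 < L)
    (hdiff : ∀ x, HasGradientAt f (g x) x)
    (hlip : ∀ u v : E, ‖g u - g v‖ ≤ L * ‖u - v‖)
    (x_prev x : E) (ω : ℝ) (hω : 0 ≤ ω)
    (xhat : E) (hxhat : xhat = x + ω • (x - x_prev))
    (xplus : E)
    (hmin : ∀ z : E,
      ⟪g xhat, xplus - xhat⟫ + L * ‖xplus - xhat‖ ^ 2 + r xplus ≤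
        ⟪g xhat, z - xhat⟫ + L * ‖z - xhat‖ ^ 2 + r z) :
    (f x + r x) - (f xplus + r xplus) ≥
        L / 4 * ‖x - xplus‖ ^ 2 - 9 * L * ω ^ 2 * ‖x_prev - x‖ ^ 2 ∧
      ∀ L' δ : ℝ, 0 < L' → 0 ≤ δ → δ < 1 → ω ≤ δ / 6 * Real.sqrt (L' / L) →
        (f x + r x) - (f xplus + r xplus) ≥
          L / 4 * ‖x - xplus‖ ^ 2 - δ ^ 2 * L' / 4 * ‖x_prev - x‖ ^ 2 := by
  -- quadratic bounds at xhat for x and xplus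
  have hx := quad_bound_aux f g L hdiff hlip xhat (x - xhat)
  have hxp := quad_bound_aux f g L hdiff hlip xhat (xplus - xhat)
  rw [add_sub_cancel, abs_le] at hx hxp
  -- the norm of x - xhat
  have ha : ‖x - xhat‖ = ω * ‖x_prev - x‖ := by
    rw [hxhat]
    have : x - (x + ω • (x - x_prev)) = ω • (x_prev - x) := by
      rw [smul_sub, smul_sub]; abel
    rw [this, norm_smul, Real.norm_eq_abs, abs_of_nonneg hω]
  -- triangle inequality
  have htri : ‖x - xplus‖ ≤ ‖x - xhat‖ + ‖xplus - xhat‖ := by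
    have := norm_sub_le_norm_sub_add_norm_sub x xhat xplus
    simpa [norm_sub_rev xhat xplus] using this
  have hminx := hmin x
  have hnn1 : (0:ℝ) ≤ ‖x - xhat‖ := norm_nonneg _
  have hnn2 : (0:ℝ) ≤ ‖xplus - xhat‖ := norm_nonneg _
  have hnn3 : (0:ℝ) ≤ ‖x - xplus‖ := norm_nonneg _
  have hnn4 : (0:ℝ) ≤ ‖x_prev - x‖ := norm_nonneg _
  -- main descent: F x - F xplus ≥ L/2 b² - 3L/2 a²
  have hmain : (f x + r x) - (f xplus + r xplus) ≥
      L / 2 * ‖xplus - xhat‖ ^ 2 - 3 * L / 2 * ‖x - xhat‖ ^ 2 := by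
    nlinarith [hx.1, hx.2, hxp.1, hxp.2]
  have hsq : ‖x - xplus‖ ^ 2 ≤ 2 * ‖x - xhat‖ ^ 2 + 2 * ‖xplus - xhat‖ ^ 2 := by
    nlinarith [mul_self_le_mul_self hnn3 htri, sq_nonneg (‖x - xhat‖ - ‖xplus - xhat‖)]
  have hfirst : (f x + r x) - (f xplus + r xplus) ≥
      L / 4 * ‖x - xplus‖ ^ 2 - 2 * L * ω ^ 2 * ‖x_prev - x‖ ^ 2 := by
    have heq : ‖x - xhat‖ ^ 2 = ω ^ 2 * ‖x_prev - x‖ ^ 2 := by rw [ha]; ring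
    have hmul := mul_le_mul_of_nonneg_left hsq (by positivity : (0:ℝ) ≤ L / 4)
    rw [heq] at hmain hmul
    linarith [hmul, hmain]
  have hpos : (0:ℝ) ≤ L * ω ^ 2 * ‖x_prev - x‖ ^ 2 := by positivity
  refine ⟨by linarith [hfirst, hpos], ?_⟩
  intro L' δ hL' hδ0 hδ1 hωδ
  have hsqrt : Real.sqrt (L' / L) ^ 2 = L' / L :=
    Real.sq_sqrt (le_of_lt (div_pos hL' hL))
  have hsnn : 0 ≤ Real.sqrt (L' / L) := Real.sqrt_nonneg _
  have hω2 : ω ^ 2 ≤ δ ^ 2 / 36 * (L' / L) := by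
    have h1 : ω ^ 2 ≤ (δ / 6 * Real.sqrt (L' / L)) ^ 2 := by
      have := mul_self_le_mul_self hω hωδ
      nlinarith [this]
    calc ω ^ 2 ≤ (δ / 6 * Real.sqrt (L' / L)) ^ 2 := h1
      _ = δ ^ 2 / 36 * (Real.sqrt (L' / L) ^ 2) := by ring
      _ = δ ^ 2 / 36 * (L' / L) := by rw [hsqrt]
  have h2 : 2 * L * ω ^ 2 ≤ δ ^ 2 * L' / 4 := by
    have hm := mul_le_mul_of_nonneg_left hω2 (le_of_lt hL)
    have hLne : L ≠ 0 := ne_of_gt hL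
    have heq2 : L * (δ ^ 2 / 36 * (L' / L)) = δ ^ 2 * L' / 36 := by
      field_simp
    rw [heq2] at hm
    have hnn : 0 ≤ δ ^ 2 * L' := mul_nonneg (sq_nonneg δ) hL'.le
    linarith [hm, hnn]
  have h3 := mul_le_mul_of_nonneg_right h2 (sq_nonneg ‖x_prev - x‖)
  linarith [hfirst, h3]
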